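/- Euler product for Dirichlet L-functions: for a Dirichlet character χ modulo N and real s > 1, the series L(s,χ) = ∑_{n=1}^∞ χ(n) n^{−s} converges absolutely and equals the product over all primes p of (1 − χ(p) p^{−s})^{−1}. -/
import Mathlib

theorem stmt_9 (N : ℕ) [NeZero N] (χ : DirichletCharacter ℂ N) (s : ℝ) (hs : 1 < s) :
    Summable (fun n : ℕ => ‖χ n * (n : ℂ) ^ (-(s : ℂ))‖) ∧
    Multipliable (fun p : Nat.Primes => (1 - χ p * (p : ℂ) ^ (-(s : ℂ)))⁻¹) ∧
    (∑' n : ℕ, χ n * (n : ℂ) ^ (-(s : ℂ))) =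
      ∏' p : Nat.Primes, (1 - χ p * (p : ℂ) ^ (-(s : ℂ)))⁻¹ := by
  have hs' : 1 < (s : ℂ).re := by simpa using hs
  have hsum := summable_dirichletSummand (s := (s : ℂ)) χ hs'
  have hprod := DirichletCharacter.LSeries_eulerProduct_hasProd (s := (s : ℂ)) χ hs'
  have htsum := tsum_dirichletSummand (s := (s : ℂ)) χ hs'
  refine ⟨hsum, hprod.multipliable, ?_⟩
  rw [show (fun n : ℕ => χ n * (n : ℂ) ^ (-(s : ℂ))) =
      fun n => dirichletSummandHom χ (Complex.ne_zero_of_one_lt_re hs') n from rfl, htsum,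
    hprod.tprod_eq]
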